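/- Let I = R ⊔ S ⊔ T be a decomposition of a finite set I into pairwise disjoint subsets, and let Φ be a parking function on I. Then park( park(Φ_{∩(S∪T)})_{∩S} ) = park(Φ_{∩S}). (This identity yields coassociativity of the coproduct Δ_{S,T}(Φ) = park(Φ_{∩S}) ⊗ park(Φ_{∩T}) on the species of parking functions.) -/

import Mathlib

/-!
STATEMENT 5: Coassociativity identity.  For a decomposition `I = R ⊔ S ⊔ T` and a parking
function `Φ` on `I`, one has `park( park(Φ_{∩(S∪T)})_{∩S} ) = park(Φ_{∩S})`.
-/

/-- `L` is a weak set composition of the finite set `I`. -/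
def IsWeakSetComp {α : Type*} [DecidableEq α] (I : Finset α) (L : List (Finset α)) : Prop :=
  L.Pairwise Disjoint ∧ L.foldr (· ∪ ·) ∅ = I

/-- `L` is a parking function on the finite set `I`. -/
def IsParkingFunction {α : Type*} [DecidableEq α] (I : Finset α) (L : List (Finset α)) : Prop :=
  IsWeakSetComp I L ∧ L.length = I.card ∧
    ∀ k, 1 ≤ k → k ≤ L.length → k ≤ ((L.take k).map Finset.card).sum

/-- One pass of the parkization algorithm: `parkAux Φ Γ` scans the blocks of `Γ` from left
to right, keeping a block `B` (appending it to the accumulator `Φ`) exactly when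
`|Φ| + |B| ≥ ℓ(Φ) + 1`, and discarding it otherwise. -/
def parkAux {α : Type*} [DecidableEq α] :
    List (Finset α) → List (Finset α) → List (Finset α)
  | Φ, [] => Φ
  | Φ, B :: Γ =>
    if (Φ.map Finset.card).sum + B.card ≥ Φ.length + 1 then parkAux (Φ ++ [B]) Γ
    else parkAux Φ Γ

/-- The parkization of a list of blocks. -/
def park {α : Type*} [DecidableEq α] (Γ : List (Finset α)) : List (Finset α) :=
  parkAux [] Γ

/-- Parkization as a function of the running excess `d = |Φ| - ℓ(Φ)`. -/
def parkD {α : Type*} [DecidableEq α] (d : ℕ) : List (Finset α) → List (Finset α)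
  | [] => []
  | B :: Γ => if d + B.card ≥ 1 then B :: parkD (d + B.card - 1) Γ else parkD d Γ

theorem parkAux_eq_parkD {α : Type*} [DecidableEq α] (Γ : List (Finset α)) :
    ∀ (acc : List (Finset α)) (d : ℕ),
      (acc.map Finset.card).sum = acc.length + d → parkAux acc Γ = acc ++ parkD d Γ := by
  induction Γ with
  | nil => intro acc d h; simp [parkAux, parkD]
  | cons B Γ ih =>
    intro acc d h
    rw [parkAux, parkD]
    by_cases hc : d + B.card ≥ 1
    · rw [if_pos (by omega), if_pos hc]
      rw [ih (acc ++ [B]) (d + B.card - 1) (by simp [h]; omega)]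
      simp
    · rw [if_neg (by omega), if_neg hc, ih acc d h]

theorem park_eq_parkD {α : Type*} [DecidableEq α] (Γ : List (Finset α)) :
    park Γ = parkD 0 Γ := by
  simpa [park] using parkAux_eq_parkD Γ [] 0 (by simp)

theorem parkD_key {α : Type*} [DecidableEq α] (S : Finset α) (Γ : List (Finset α)) :
    ∀ d e : ℕ, e ≤ d →
      parkD e ((parkD d Γ).map (· ∩ S)) = parkD e (Γ.map (· ∩ S)) := by
  induction Γ with
  | nil => intro d e _; simp [parkD]
  | cons B Γ ih =>
    intro d e hed
    have hBS : (B ∩ S).card ≤ B.card := Finset.card_le_card Finset.inter_subset_left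
    by_cases hd : d + B.card ≥ 1
    · rw [parkD, if_pos hd]
      simp only [List.map_cons, parkD]
      by_cases he : e + (B ∩ S).card ≥ 1
      · rw [if_pos he, if_pos he, ih (d + B.card - 1) (e + (B ∩ S).card - 1) (by omega)]
      · rw [if_neg he, if_neg he, ih (d + B.card - 1) e (by omega)]
    · have hd0 : d = 0 := by omega
      have hB0 : B.card = 0 := by omega
      have he0 : e = 0 := by omega
      have hBS0 : (B ∩ S).card = 0 := by omega
      rw [parkD, if_neg hd]
      simp only [List.map_cons, parkD, hBS0, he0]
      rw [if_neg (by omega)]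
      rw [← he0]; exact ih d e hed

theorem park_restrict_coassoc {α : Type*} [DecidableEq α]
    (R S T : Finset α) (hRS : Disjoint R S) (hRT : Disjoint R T) (hST : Disjoint S T)
    (Φ : List (Finset α)) (hΦ : IsParkingFunction (R ∪ S ∪ T) Φ) :
    park ((park (Φ.map (· ∩ (S ∪ T)))).map (· ∩ S)) = park (Φ.map (· ∩ S)) := by
  rw [park_eq_parkD, park_eq_parkD, park_eq_parkD,
    parkD_key S (Φ.map (· ∩ (S ∪ T))) 0 0 le_rfl, List.map_map]
  congr 1
  apply List.map_congr_left
  intro x _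
  show x ∩ (S ∪ T) ∩ S = x ∩ S
  rw [Finset.inter_assoc, Finset.union_inter_cancel_left]
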